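/- Let Γ be a group that is the direct union of subgroups Γ_i, equipped with a left-invariant metric with finite balls, let Γ ⊴ Γ', H ≤ Γ' finite with |H| ≤ k, and fix r > 0. Choose i such that B_{2(k+1)r}(e) ∩ Γ ⊆ Γ_i. Let Z_H := ⟨B_r(e) ∩ HΓ⟩ (subgroup of Γ' generated by the ball intersected with HΓ). Then Z_H ∩ Γ ≤ Γ_i. -/

import Mathlib

/-- Let `Γ'` be a group with a left-invariant metric with finite balls,
`Γ ⊴ Γ'` a normal subgroup which is the direct union of subgroups `Γᵢ`, `H ≤ Γ'` finite
with `|H| ≤ k`, and `r > 0`.  Choose `i` with `B_{2(k+1)r}(e) ∩ Γ ⊆ Γᵢ` and let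
`Z_H := ⟨B_r(e) ∩ HΓ⟩`.  Then `Z_H ∩ Γ ≤ Γᵢ`. -/
theorem generated_subgroup_inter_le
    (Γ' : Type*) [Group Γ'] (d : Γ' → Γ' → ℝ)
    (hrefl : ∀ γ, d γ γ = 0) (hsep : ∀ γ γ'', d γ γ'' = 0 → γ = γ'')
    (hsymm : ∀ γ γ'', d γ γ'' = d γ'' γ)
    (htri : ∀ γ₁ γ₂ γ₃, d γ₁ γ₃ ≤ d γ₁ γ₂ + d γ₂ γ₃)
    (hinv : ∀ γ γ₁ γ₂, d (γ * γ₁) (γ * γ₂) = d γ₁ γ₂)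
    (hballs : ∀ R : ℝ, {g : Γ' | d 1 g ≤ R}.Finite)
    (Γ : Subgroup Γ') (hnormal : Γ.Normal)
    (H : Subgroup Γ') [Finite H] (k : ℕ) (hk : Nat.card H ≤ k)
    (r : ℝ) (hr : 0 < r)
    (Γi : Subgroup Γ') (hΓi : Γi ≤ Γ)
    (hball : {g : Γ' | d 1 g < 2 * (k + 1) * r} ∩ (Γ : Set Γ') ⊆ (Γi : Set Γ'))
    (ZH : Subgroup Γ')
    (hZH : ZH = Subgroup.closure ({g : Γ' | d 1 g < r} ∩ ((H ⊔ Γ : Subgroup Γ') : Set Γ'))) :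
    (ZH : Set Γ') ∩ (Γ : Set Γ') ⊆ (Γi : Set Γ') := by
  haveI := hnormal
  set S : Set Γ' := {g : Γ' | d 1 g < r} ∩ ((H ⊔ Γ : Subgroup Γ') : Set Γ') with hS
  -- basic metric facts
  have dinv : ∀ g : Γ', d 1 g⁻¹ = d 1 g := by
    intro g
    have h1 := hinv g 1 g⁻¹
    rw [mul_one, mul_inv_cancel] at h1
    rw [← h1, hsymm]
  have dmul : ∀ g h : Γ', d 1 (g * h) ≤ d 1 g + d 1 h := by
    intro g h
    have h1 := hinv g 1 h
    rw [mul_one] at h1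
    calc d 1 (g * h) ≤ d 1 g + d g (g * h) := htri _ _ _
    _ = d 1 g + d 1 h := by rw [h1]
  -- S is symmetric
  have Ssymm : ∀ x : Γ', x⁻¹ ∈ S → x ∈ S := by
    intro x hx
    obtain ⟨hx1, hx2⟩ := hx
    refine ⟨?_, ?_⟩
    · show d 1 x < r
      rw [← inv_inv x, dinv]; exact hx1
    · show x ∈ (H ⊔ Γ : Subgroup Γ')
      have h2 : x⁻¹ ∈ (H ⊔ Γ : Subgroup Γ') := hx2
      simpa using inv_mem h2
  -- bound on products of small elements
  have prod_bound : ∀ l : List Γ', (∀ x ∈ l, x ∈ S) → d 1 l.prod ≤ l.length * r := by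
    intro l
    induction l with
    | nil => intro _; simp [hrefl]
    | cons x t ih =>
      intro hmem
      have hx : x ∈ S := hmem x List.mem_cons_self
      have ht := ih (fun y hy => hmem y (List.mem_cons_of_mem x hy))
      calc d 1 (x :: t).prod = d 1 (x * t.prod) := by rw [List.prod_cons]
      _ ≤ d 1 x + d 1 t.prod := dmul _ _
      _ ≤ r + t.length * r := add_le_add (le_of_lt hx.1) ht
      _ = (x :: t).length * r := by
          simp only [List.length_cons]
          push_cast
          ring
  -- members of S lie in H ⊔ Γ
  have memS : ∀ x ∈ S, x ∈ (H ⊔ Γ : Subgroup Γ') := fun x hx => hx.2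
  -- the quotient group setup
  let M : Subgroup (Γ' ⧸ Γ) := Subgroup.map (QuotientGroup.mk' Γ) H
  have hsur : Function.Surjective
      (fun h : H => (⟨QuotientGroup.mk' Γ h, Subgroup.mem_map_of_mem _ h.2⟩ : M)) := by
    rintro ⟨y, hy⟩
    obtain ⟨h, hh, rfl⟩ := hy
    exact ⟨⟨h, hh⟩, rfl⟩
  haveI : Finite M := Finite.of_surjective _ hsur
  have hMcard : Nat.card M ≤ k := le_trans (Nat.card_le_card_of_surjective _ hsur) hk
  -- quotient image of elements of H ⊔ Γ lie in M
  have hquot : ∀ x : Γ', x ∈ (H ⊔ Γ : Subgroup Γ') → (x : Γ' ⧸ Γ) ∈ M := by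
    intro x hx
    have hx' : x ∈ (↑(H ⊔ Γ) : Set Γ') := hx
    rw [Subgroup.mul_normal H Γ] at hx'
    obtain ⟨h, hh, γ, hγ, rfl⟩ := hx' 
    have : ((h * γ : Γ') : Γ' ⧸ Γ) = (h : Γ' ⧸ Γ) := by
      rw [QuotientGroup.eq]
      group
      simpa using (Subgroup.inv_mem Γ hγ)
    rw [this]
    exact ⟨h, hh, rfl⟩
  -- key claim by strong induction on word length
  have key : ∀ n : ℕ, ∀ l : List Γ', l.length = n → (∀ x ∈ l, x ∈ S) → l.prod ∈ Γ →
      l.prod ∈ Γi := by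
    intro n
    induction n using Nat.strong_induction_on with
    | _ n ih =>
      intro l hlen hmem hΓmem
      by_cases hn : n ≤ k
      · -- short word: directly in the ball
        apply hball
        refine ⟨?_, hΓmem⟩
        show d 1 l.prod < 2 * (k + 1) * r
        calc d 1 l.prod ≤ l.length * r := prod_bound l hmem
        _ < 2 * (k + 1) * r := by
            apply mul_lt_mul_of_pos_right _ hr
            rw [hlen]
            have : (n : ℝ) ≤ (k : ℝ) := by exact_mod_cast hn
            nlinarith [this]
      · push_neg at hn
        -- prefixes
        set p : ℕ → Γ' := fun j => (l.take j).prod with hp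
        have pmem : ∀ j, p j ∈ (H ⊔ Γ : Subgroup Γ') := by
          intro j
          apply Subgroup.list_prod_mem
          intro x hx
          exact memS x (hmem x (List.mem_of_mem_take hx))
        have pbound : ∀ j, d 1 (p j) ≤ j * r := by
          intro j
          calc d 1 (p j) ≤ (l.take j).length * r :=
            prod_bound _ (fun x hx => hmem x (List.mem_of_mem_take hx))
          _ ≤ j * r := by
              apply mul_le_mul_of_nonneg_right _ (le_of_lt hr)
              have : (l.take j).length ≤ j := by
                rw [List.length_take]; exact min_le_left _ _
              exact_mod_cast this
        -- core argument, symmetric in the pair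
        have core : ∀ a b : ℕ, a < b → b ≤ k →
            ((p a : Γ' ⧸ Γ) = (p b : Γ' ⧸ Γ)) → l.prod ∈ Γi := by
          intro a b hlt hbk hqeq
          have hmemΓ : (p a)⁻¹ * p b ∈ Γ := (QuotientGroup.eq).mp hqeq
          set u : Γ' := p b * (p a)⁻¹ with hu
          have huΓ : u ∈ Γ := by
            have h1 : u = p a * ((p a)⁻¹ * p b) * (p a)⁻¹ := by rw [hu]; group
            rw [h1]
            exact hnormal.conj_mem _ hmemΓ (p a)
          -- the shorter word
          set l' : List Γ' := l.take a ++ l.drop b with hl'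
          have hl'mem : ∀ x ∈ l', x ∈ S := by
            intro x hx
            rcases List.mem_append.mp hx with h | h
            · exact hmem x (List.mem_of_mem_take h)
            · exact hmem x (List.mem_of_mem_drop h)
          have hsplit : l.prod = u * l'.prod := by
            have h1 : l = l.take b ++ l.drop b := (List.take_append_drop _ l).symm
            calc l.prod = (l.take b).prod * (l.drop b).prod := by
                  conv_lhs => rw [h1]
                  rw [List.prod_append]
            _ = u * ((l.take a).prod * (l.drop b).prod) := by
                  rw [hu]; show p b * _ = _ * (p a * _); group
            _ = u * l'.prod := by rw [hl', List.prod_append]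
          have hl'Γ : l'.prod ∈ Γ := by
            have h2 : l'.prod = u⁻¹ * l.prod := by rw [hsplit]; group
            rw [h2]
            exact Subgroup.mul_mem Γ (Subgroup.inv_mem Γ huΓ) hΓmem
          have hl'len : l'.length < n := by
            rw [hl', List.length_append, List.length_take, List.length_drop, hlen]
            omega
          have hl'Γi : l'.prod ∈ Γi := ih l'.length hl'len l' rfl hl'mem hl'Γ
          -- u is in the ball
          have huΓi : u ∈ Γi := by
            apply hball
            refine ⟨?_, huΓ⟩
            show d 1 u < 2 * (k + 1) * r
            calc d 1 u ≤ d 1 (p b) + d 1 ((p a)⁻¹) := dmul _ _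
            _ = d 1 (p b) + d 1 (p a) := by rw [dinv]
            _ ≤ (b : ℝ) * r + (a : ℝ) * r := add_le_add (pbound _) (pbound _)
            _ < 2 * (k + 1) * r := by
                have ha' : (a : ℝ) ≤ (k : ℝ) := by exact_mod_cast le_of_lt (lt_of_lt_of_le hlt hbk)
                have hb' : (b : ℝ) ≤ (k : ℝ) := by exact_mod_cast hbk
                nlinarith
          rw [hsplit]
          exact Subgroup.mul_mem Γi huΓi hl'Γi
        -- pigeonhole
        haveI : Fintype M := Fintype.ofFinite M
        have hcard : Fintype.card M < Fintype.card (Fin (k + 1)) := by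
          rw [Nat.card_eq_fintype_card] at hMcard
          rw [Fintype.card_fin]
          omega
        obtain ⟨a, b, hab, heq⟩ := Fintype.exists_ne_map_eq_of_card_lt
          (fun j : Fin (k + 1) => (⟨(p j : Γ' ⧸ Γ), hquot _ (pmem j)⟩ : M)) hcard
        have hqeq : ((p a : Γ') : Γ' ⧸ Γ) = ((p b : Γ') : Γ' ⧸ Γ) :=
          congrArg Subtype.val heq
        rcases lt_or_gt_of_ne (fun h : (a : ℕ) = (b : ℕ) => hab (Fin.ext h)) with hlt | hlt
        · exact core a b hlt (by omega) hqeq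
        · exact core b a hlt (by omega) hqeq.symm
  -- assemble
  rintro z ⟨hz1, hz2⟩
  rw [hZH] at hz1
  have hz1' : z ∈ Submonoid.closure (S ∪ S⁻¹) := by
    rw [← Subgroup.closure_toSubmonoid]
    exact hz1
  obtain ⟨l, hl, hprod⟩ := Submonoid.exists_list_of_mem_closure hz1'
  have hlS : ∀ x ∈ l, x ∈ S := by
    intro x hx
    rcases hl x hx with h | h
    · exact h
    · exact Ssymm x h
  rw [← hprod] at hz2 ⊢
  exact key l.length l rfl hlS hz2
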